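/- For k > 2 and any even r with 0 ≤ r ≤ 2k−2, the number of conjugation-unstable ways to split the multiset of roots of a degree-(2k−2) squarefree real polynomial (with r real roots) into an ordered pair of blocks of size k−1 each is divisible by 4; consequently C(2k−2, k−1) − ν(k, 2k, r) ≡ 0 (mod 4). -/

import Mathlib

open Polynomial

/-- ν(k, n, r): the coefficient of x^{n−k−1} y^{k−1} in (x+y)^r (x²+y²)^{(n−2−r)/2}. -/
noncomputable def nu (k n r : ℕ) : ℕ :=
  MvPolynomial.coeff (Finsupp.single 0 (n - k - 1) + Finsupp.single 1 (k - 1))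
    (((MvPolynomial.X 0 + MvPolynomial.X 1) ^ r *
      (MvPolynomial.X 0 ^ 2 + MvPolynomial.X 1 ^ 2) ^ ((n - 2 - r) / 2) :
        MvPolynomial (Fin 2) ℕ))

/-- A complex polynomial has all real coefficients. -/
def IsRealPoly (g : Polynomial ℂ) : Prop := ∀ i, (g.coeff i).im = 0


lemma four_dvd_card {α : Type*} [DecidableEq α] (f g : α → α)
    (T : Finset α)
    (hfT : ∀ a ∈ T, f a ∈ T) (hgT : ∀ a ∈ T, g a ∈ T)
    (hff : ∀ a ∈ T, f (f a) = a) (hgg : ∀ a ∈ T, g (g a) = a)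
    (hcomm : ∀ a ∈ T, f (g a) = g (f a))
    (hf : ∀ a ∈ T, f a ≠ a) (hg : ∀ a ∈ T, g a ≠ a)
    (hfg : ∀ a ∈ T, f (g a) ≠ a) :
    4 ∣ T.card := by
  induction T using Finset.strongInduction with
  | _ T ih =>
    rcases T.eq_empty_or_nonempty with rfl | ⟨a, ha⟩
    · simp
    · have hfa := hfT a ha
      have hga := hgT a ha
      have hfga := hfT _ hga
      have d1 : f a ≠ a := hf a ha
      have d2 : g a ≠ a := hg a ha
      have d3 : f (g a) ≠ a := hfg a ha
      have d4 : f a ≠ g a := by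
        intro h
        exact d3 (by rw [← h, hff a ha])
      have d5 : f a ≠ f (g a) := by
        intro h
        have := congrArg f h
        rw [hff a ha, hff _ hga] at this
        exact d2 this.symm
      have d6 : g a ≠ f (g a) := fun h => hf _ hga h.symm
      set O : Finset α := {a, f a, g a, f (g a)} with hO
      have hOsub : O ⊆ T := by
        intro x hx
        simp only [hO, Finset.mem_insert, Finset.mem_singleton] at hx
        rcases hx with rfl | rfl | rfl | rfl <;> assumption
      have hOcard : O.card = 4 := by
        rw [hO]
        rw [Finset.card_insert_of_notMem (by simp [d1.symm, d2.symm, d3.symm]),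
          Finset.card_insert_of_notMem (by simp [d4, d5]),
          Finset.card_insert_of_notMem (by simp [d6]), Finset.card_singleton]
      set T' := T \ O with hT'
      have hssub : T' ⊆ T := Finset.sdiff_subset
      have hmemO : ∀ x ∈ T, (f x ∈ O → x ∈ O) ∧ (g x ∈ O → x ∈ O) := by
        intro x hx
        constructor
        · intro hfx
          simp only [hO, Finset.mem_insert, Finset.mem_singleton] at hfx ⊢
          rcases hfx with h | h | h | h
          · right; left; rw [← h, hff x hx]
          · left; have := congrArg f h; rwa [hff x hx, hff a ha] at this
          · right; right; right; rw [← hff x hx, h]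
          · right; right; left; rw [← hff x hx, h, hff _ hga]
        · intro hgx
          simp only [hO, Finset.mem_insert, Finset.mem_singleton] at hgx ⊢
          rcases hgx with h | h | h | h
          · right; right; left; rw [← h, hgg x hx]
          · right; right; right
            rw [hcomm a ha, ← h, hgg x hx]
          · left; have := congrArg g h; rwa [hgg x hx, hgg a ha] at this
          · right; left
            rw [← hgg x hx, h, ← hcomm _ hga, hgg a ha]
      have h4le : 4 ≤ T.card := hOcard ▸ Finset.card_le_card hOsub
      have hcard : T.card = T'.card + 4 := by
        rw [hT', Finset.card_sdiff_of_subset hOsub, hOcard]; omega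
      have hnot : ∀ x ∈ T', x ∉ O := by intro x hx; exact (Finset.mem_sdiff.mp hx).2
      have hmem' : ∀ x ∈ T', f x ∈ T' ∧ g x ∈ T' := by
        intro x hx
        have hxT := hssub hx
        refine ⟨Finset.mem_sdiff.mpr ⟨hfT x hxT, fun h => hnot x hx ((hmemO x hxT).1 h)⟩,
          Finset.mem_sdiff.mpr ⟨hgT x hxT, fun h => hnot x hx ((hmemO x hxT).2 h)⟩⟩
      have hsub : T' ⊂ T := Finset.ssubset_iff_of_subset hssub |>.mpr
        ⟨a, ha, fun h => hnot a h (by simp [hO])⟩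
      have := ih T' hsub (fun x hx => (hmem' x hx).1) (fun x hx => (hmem' x hx).2)
        (fun x hx => hff x (hssub hx)) (fun x hx => hgg x (hssub hx))
        (fun x hx => hcomm x (hssub hx)) (fun x hx => hf x (hssub hx))
        (fun x hx => hg x (hssub hx)) (fun x hx => hfg x (hssub hx))
      omega

section NuPart
open Finset
open MvPolynomial Finset


abbrev MvP := MvPolynomial (Fin 2) (ZMod 4)

lemma finsupp_pair_eq (a b i j : ℕ) :
    (Finsupp.single (0 : Fin 2) i + Finsupp.single 1 j
      = Finsupp.single 0 a + Finsupp.single 1 b) ↔ (i = a ∧ j = b) := by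
  constructor
  · intro h
    constructor
    · have := DFunLike.congr_fun h 0
      simpa using this
    · have := DFunLike.congr_fun h 1
      simpa using this
  · rintro ⟨rfl, rfl⟩; rfl

lemma coeff_XY {R : Type*} [CommSemiring R] (a b i j : ℕ) :
    MvPolynomial.coeff (Finsupp.single 0 a + Finsupp.single 1 b)
      ((MvPolynomial.X 0 ^ i * MvPolynomial.X 1 ^ j : MvPolynomial (Fin 2) R)) = if i = a ∧ j = b then 1 else 0 := by
  rw [MvPolynomial.X_pow_eq_monomial, MvPolynomial.X_pow_eq_monomial, MvPolynomial.monomial_mul, MvPolynomial.coeff_monomial, one_mul]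
  simp [finsupp_pair_eq]

lemma coeff_binom {R : Type*} [CommSemiring R] (n a b : ℕ) :
    MvPolynomial.coeff (Finsupp.single 0 a + Finsupp.single 1 b)
      (((MvPolynomial.X 0 + MvPolynomial.X 1 : MvPolynomial (Fin 2) R))^n)
      = if a + b = n then (n.choose a : R) else 0 := by
  rw [add_pow, MvPolynomial.coeff_sum]
  have hterm : ∀ m ∈ range (n+1),
      MvPolynomial.coeff (Finsupp.single 0 a + Finsupp.single 1 b)
        ((MvPolynomial.X 0:MvPolynomial (Fin 2) R)^m * MvPolynomial.X 1^(n-m) * (n.choose m : MvPolynomial (Fin 2) R))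
      = if m = a ∧ n - m = b then (n.choose m : R) else 0 := by
    intro m hm
    rw [show ((n.choose m : ℕ) : MvPolynomial (Fin 2) R) = MvPolynomial.C ((n.choose m : ℕ) : R) by
      simp, mul_comm _ (MvPolynomial.C ((n.choose m : ℕ) : R)), MvPolynomial.coeff_C_mul, coeff_XY]
    split <;> simp
  rw [Finset.sum_congr rfl hterm]
  by_cases h : a + b = n
  · rw [Finset.sum_eq_single a]
    · simp [h, show n - a = b by omega]
    · intro m hm hma
      simp only [ite_eq_right_iff]
      intro ⟨h1, h2⟩; exact absurd h1 hma
    · intro ha; exact absurd (Finset.mem_range.mpr (by omega)) ha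
  · rw [if_neg h]
    apply Finset.sum_eq_zero
    intro m hm
    simp only [Finset.mem_range] at hm
    simp only [ite_eq_right_iff]
    intro ⟨h1, h2⟩
    omega

lemma coeff_Bpow {R : Type*} [CommSemiring R] (c a b : ℕ) :
    MvPolynomial.coeff (Finsupp.single 0 a + Finsupp.single 1 b)
      (((MvPolynomial.X 0 ^ 2 + MvPolynomial.X 1 ^ 2 : MvPolynomial (Fin 2) R))^c)
      = if a + b = 2*c ∧ a % 2 = 0 then (c.choose (a/2) : R) else 0 := by
  rw [add_pow, MvPolynomial.coeff_sum]
  have hterm : ∀ m ∈ range (c+1),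
      MvPolynomial.coeff (Finsupp.single 0 a + Finsupp.single 1 b)
        (((MvPolynomial.X 0:MvPolynomial (Fin 2) R)^2)^m * (MvPolynomial.X 1^2)^(c-m) * (c.choose m : MvPolynomial (Fin 2) R))
      = if 2*m = a ∧ 2*(c - m) = b then (c.choose m : R) else 0 := by
    intro m hm
    rw [← pow_mul, ← pow_mul,
      show ((c.choose m : ℕ) : MvPolynomial (Fin 2) R) = MvPolynomial.C ((c.choose m : ℕ) : R) by simp,
      mul_comm _ (MvPolynomial.C ((c.choose m : ℕ) : R)), MvPolynomial.coeff_C_mul, coeff_XY]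
    split <;> simp
  rw [Finset.sum_congr rfl hterm]
  by_cases h : a + b = 2*c ∧ a % 2 = 0
  · rw [if_pos h]
    rw [Finset.sum_eq_single (a/2)]
    · rw [if_pos (by omega)]
    · intro m hm hma
      simp only [ite_eq_right_iff]
      intro ⟨h1, h2⟩; omega
    · intro ha; exact absurd (Finset.mem_range.mpr (by omega)) ha
  · rw [if_neg h]
    apply Finset.sum_eq_zero
    intro m hm
    simp only [Finset.mem_range] at hm
    simp only [ite_eq_right_iff]
    intro ⟨h1, h2⟩
    omega

lemma four_eq_zero : (4 : MvP) = 0 := by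
  rw [← map_ofNat (MvPolynomial.C : ZMod 4 →+* MvP) 4, show (4 : ZMod 4) = 0 by decide, map_zero]

lemma key_identity : ∀ c : ℕ,
    ((MvPolynomial.X 0 + MvPolynomial.X 1 : MvP))^(2*(c+1))
      = (MvPolynomial.X 0 ^ 2 + MvPolynomial.X 1 ^ 2)^(c+1)
        + ((2*(c+1) : ℕ) : MvP) * MvPolynomial.X 0 * MvPolynomial.X 1 * (MvPolynomial.X 0 ^ 2 + MvPolynomial.X 1 ^ 2)^c := by
  intro c
  induction c with
  | zero => push_cast; ring
  | succ c ih =>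
    have h1 : 2*(c+1+1) = 2*(c+1) + 2 := by ring
    rw [h1, pow_add, ih]
    push_cast
    linear_combination (((c:MvP)+1) * MvPolynomial.X 0^2 * MvPolynomial.X 1^2 * (MvPolynomial.X 0 ^ 2 + MvPolynomial.X 1 ^ 2)^c) * four_eq_zero

lemma coeff_XYB {R : Type*} [CommSemiring R] (q a b : ℕ) :
    MvPolynomial.coeff (Finsupp.single 0 (a+1) + Finsupp.single 1 (b+1))
      (MvPolynomial.X 0 * MvPolynomial.X 1 * ((MvPolynomial.X 0 ^ 2 + MvPolynomial.X 1 ^ 2 : MvPolynomial (Fin 2) R))^q)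
    = MvPolynomial.coeff (Finsupp.single 0 a + Finsupp.single 1 b)
      (((MvPolynomial.X 0 ^ 2 + MvPolynomial.X 1 ^ 2 : MvPolynomial (Fin 2) R))^q) := by
  have hm : (Finsupp.single (0:Fin 2) (a+1) + Finsupp.single 1 (b+1))
      = Finsupp.single (0:Fin 2) 1 + (Finsupp.single (1:Fin 2) 1
        + (Finsupp.single 0 a + Finsupp.single 1 b)) := by
    rw [Finsupp.single_add, Finsupp.single_add]
    abel
  rw [hm, mul_assoc, MvPolynomial.coeff_X_mul, MvPolynomial.coeff_X_mul]

lemma even_central (e : ℕ) : (2*(e+1)).choose (e+1) = 2 * ((2*e+1).choose e) := by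
  rw [show 2*(e+1) = (2*e+1)+1 by ring, Nat.choose_succ_succ]
  simp only [Nat.succ_eq_add_one]
  rw [show e + 1 = (2*e+1) - e by omega, Nat.choose_symm (by omega : e ≤ 2*e+1)]
  ring


lemma part2 (k r : ℕ) (hk : 2 < k) (hre : Even r) (hr : r ≤ 2 * k - 2) :
    ((2 * k - 2).choose (k - 1) : ZMod 4) = ((nu k (2*k) r : ℕ) : ZMod 4) := by
  obtain ⟨s, hs⟩ := hre
  rw [nu]
  set c : ℕ := (2*k - 2 - r)/2 with hc
  have hcc : (2*k - 2 - r)/2 = c := rfl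
  have hsc : s + c = k - 1 := by omega
  have e1 : 2*k - k - 1 = k - 1 := by omega
  have e2 : 2*k - 2 - r = 2*k - 2 - r := rfl
  rw [show (2*k : ℕ) - 2 = 2*k-2 from rfl] at *
  rw [e1]
  set m : Fin 2 →₀ ℕ := Finsupp.single 0 (k-1) + Finsupp.single 1 (k-1) with hm
  set N : ℕ := MvPolynomial.coeff m
        (((MvPolynomial.X 0 + MvPolynomial.X 1) ^ r *
          (MvPolynomial.X 0 ^ 2 + MvPolynomial.X 1 ^ 2) ^ c : MvPolynomial (Fin 2) ℕ)) with hN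
  have hcast : (N : ZMod 4)
      = MvPolynomial.coeff m
        (((MvPolynomial.X 0 + MvPolynomial.X 1) ^ r * (MvPolynomial.X 0 ^ 2 + MvPolynomial.X 1 ^ 2) ^ c : MvP)) := by
    have h := (MvPolynomial.coeff_map (Nat.castRingHom (ZMod 4))
        (((MvPolynomial.X 0 + MvPolynomial.X 1) ^ r *
          (MvPolynomial.X 0 ^ 2 + MvPolynomial.X 1 ^ 2) ^ c : MvPolynomial (Fin 2) ℕ)) m).symm
    rw [hN]
    refine Eq.trans h ?_
    congr 1
    simp [map_mul, map_pow, map_add, MvPolynomial.map_X]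
  rw [hcast]
  have hch : ((2*k - 2).choose (k-1) : ZMod 4)
      = MvPolynomial.coeff m (((MvPolynomial.X 0 + MvPolynomial.X 1 : MvP))^(2*k-2)) := by
    rw [coeff_binom, if_pos (by omega)]
  rw [hch]
  set T : ZMod 4 := MvPolynomial.coeff (Finsupp.single 0 (k-2) + Finsupp.single 1 (k-2))
      (((MvPolynomial.X 0 ^ 2 + MvPolynomial.X 1 ^ 2 : MvP))^(k-2)) with hT
  have hcoeffXYB : ∀ q : ℕ, q = k - 2 →
      MvPolynomial.coeff m (MvPolynomial.X 0 * MvPolynomial.X 1 * ((MvPolynomial.X 0 ^ 2 + MvPolynomial.X 1 ^ 2 : MvP))^q) = T := by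
    intro q hq
    subst hq
    have : m = Finsupp.single 0 ((k-2)+1) + Finsupp.single 1 ((k-2)+1) := by
      rw [hm, show k - 1 = (k-2)+1 by omega]
    rw [this, coeff_XYB]
  have hL : MvPolynomial.coeff m (((MvPolynomial.X 0 + MvPolynomial.X 1 : MvP))^(2*k-2))
      = MvPolynomial.coeff m (((MvPolynomial.X 0 ^ 2 + MvPolynomial.X 1 ^ 2 : MvP))^(k-1))
        + ((2*(k-1) : ℕ) : ZMod 4) * T := by
    rw [show 2*k-2 = 2*((k-2)+1) by omega, key_identity, MvPolynomial.coeff_add]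
    congr 1
    · congr 2; omega
    · rw [show ((2*((k-2)+1) : ℕ) : MvP) = MvPolynomial.C ((2*((k-2)+1) : ℕ) : ZMod 4) from (map_natCast MvPolynomial.C _).symm,
        mul_assoc, mul_assoc, MvPolynomial.coeff_C_mul, ← mul_assoc, hcoeffXYB _ rfl]
      congr 2
      omega
  have hR : MvPolynomial.coeff m (((MvPolynomial.X 0 + MvPolynomial.X 1) ^ r * (MvPolynomial.X 0 ^ 2 + MvPolynomial.X 1 ^ 2) ^ c : MvP))
      = MvPolynomial.coeff m (((MvPolynomial.X 0 ^ 2 + MvPolynomial.X 1 ^ 2 : MvP))^(k-1)) + ((r : ℕ) : ZMod 4) * T := by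
    rcases Nat.eq_zero_or_eq_succ_pred s with hs0 | hs1
    · subst hs0
      have hr0 : r = 0 := by omega
      subst hr0
      have : c = k - 1 := by omega
      rw [this, pow_zero, one_mul]
      simp
    · set s' := s - 1 with hs'
      have hrr : r = 2*(s'+1) := by omega
      rw [hrr, key_identity, add_mul, MvPolynomial.coeff_add]
      congr 1
      · rw [← pow_add, show (s'+1) + c = k - 1 by omega]
      · rw [mul_assoc _ _ ((MvPolynomial.X 0 ^ 2 + MvPolynomial.X 1 ^ 2 : MvP)^c), ← pow_add,
          show ((2*(s'+1) : ℕ) : MvP) = MvPolynomial.C ((2*(s'+1) : ℕ) : ZMod 4) from (map_natCast MvPolynomial.C _).symm,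
          mul_assoc, mul_assoc, MvPolynomial.coeff_C_mul, ← mul_assoc,
          hcoeffXYB _ (by omega)]
  rw [hL, hR]
  congr 1
  rcases Nat.even_or_odd k with hke | hko
  · obtain ⟨t, ht⟩ := hke
    have hT2 : T = (((k-2).choose ((k-2)/2) : ℕ) : ZMod 4) := by
      rw [hT, coeff_Bpow]
      rw [if_pos (show (k-2) + (k-2) = 2*(k-2) ∧ (k-2) % 2 = 0 by omega)]
    have heven : (k-2).choose ((k-2)/2) = 2 * ((2*(t-2)+1).choose (t-2)) := by
      rw [show k-2 = 2*((t-2)+1) by omega, show (2*((t-2)+1))/2 = (t-2)+1 by omega,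
        even_central]
    set w : ℕ := (2*(t-2)+1).choose (t-2) with hw
    have hzz : ∀ a : ℕ, ((2*a : ℕ) : ZMod 4) * ((2*w : ℕ) : ZMod 4) = 0 := by
      intro a
      push_cast
      have h22 : (2 : ZMod 4) * 2 = 0 := by decide
      linear_combination ((a : ZMod 4) * (w : ZMod 4)) * h22
    have hTw : T = ((2*w : ℕ) : ZMod 4) := by rw [hT2, heven]
    rw [hTw, hzz (k-1), show r = 2*s by omega, hzz s]
  · have hT0 : T = 0 := by
      rw [hT, coeff_Bpow]
      rw [if_neg (show ¬((k-2) + (k-2) = 2*(k-2) ∧ (k-2) % 2 = 0) by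
        rcases hko with ⟨t, ht⟩; omega)]
    rw [hT0]
    ring

end NuPart
noncomputable abbrev conjP (g : Polynomial ℂ) : Polynomial ℂ := g.map (starRingEnd ℂ)

lemma conjP_conjP (g : Polynomial ℂ) : conjP (conjP g) = g := by
  rw [conjP, conjP, Polynomial.map_map,
    show (starRingEnd ℂ).comp (starRingEnd ℂ) = RingHom.id ℂ from
      RingHom.ext fun z => Complex.conj_conj z, Polynomial.map_id]

lemma conjP_inj {g h : Polynomial ℂ} (H : conjP g = conjP h) : g = h := by
  have := congrArg conjP H
  rwa [conjP_conjP, conjP_conjP] at this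

lemma isRealPoly_iff2 (g : Polynomial ℂ) : IsRealPoly g ↔ conjP g = g := by
  constructor
  · intro h
    ext n
    rw [Polynomial.coeff_map]
    exact Complex.conj_eq_iff_im.mpr (h n)
  · intro h n
    have := congrArg (fun q => Polynomial.coeff q n) h
    simp only [Polynomial.coeff_map] at this
    exact Complex.conj_eq_iff_im.mp this

lemma splitsC (g : Polynomial ℂ) : g.Splits := IsAlgClosed.splits g

lemma roots_conjP (g : Polynomial ℂ) : (conjP g).roots = g.roots.map (starRingEnd ℂ) :=
  (splitsC g).roots_map _

lemma card_roots_monic {g : Polynomial ℂ} (hg : g.Monic) :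
    (Multiset.card g.roots) = g.natDegree :=
  Polynomial.splits_iff_card_roots.mp (splitsC g)

lemma monic_eq_prod {g : Polynomial ℂ} (hg : g.Monic) :
    g = (g.roots.map fun a => X - C a).prod :=
  (splitsC g).eq_prod_roots_of_monic hg

lemma conjP_prod (s : Multiset ℂ) :
    conjP ((s.map fun a => X - C a).prod)
      = (s.map fun a => X - C ((starRingEnd ℂ) a)).prod := by
  have : conjP ((s.map fun a => X - C a).prod)
      = Polynomial.mapRingHom (starRingEnd ℂ) ((s.map fun a => X - C a).prod) := rfl
  rw [this, map_multiset_prod, Multiset.map_map]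
  congr 1
  apply Multiset.map_congr rfl
  intro a _
  simp [Polynomial.map_sub]

lemma realPoly_roots_conj {g : Polynomial ℂ} (hg : IsRealPoly g) {z : ℂ}
    (hz : z ∈ g.roots) : (starRingEnd ℂ) z ∈ g.roots := by
  have h := (isRealPoly_iff2 g).mp hg
  have : (starRingEnd ℂ) z ∈ (conjP g).roots := by
    rw [roots_conjP]
    exact Multiset.mem_map_of_mem _ hz
  rwa [h] at this

lemma part1 (k : ℕ) (hk : 2 < k) (p : Polynomial ℝ) (hp : p.Monic)
    (hdeg : p.natDegree = 2 * k - 2)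
    (hnodup : ((p.map (algebraMap ℝ ℂ)).roots).Nodup) :
    4 ∣ Set.ncard {q : Polynomial ℂ × Polynomial ℂ |
        q.1.Monic ∧ q.2.Monic ∧ q.1.natDegree = k - 1 ∧ q.2.natDegree = k - 1 ∧
        p.map (algebraMap ℝ ℂ) = q.1 * q.2 ∧
        ¬(IsRealPoly q.1 ∧ IsRealPoly q.2)} := by
  classical
  set P : Polynomial ℂ := p.map (algebraMap ℝ ℂ) with hPdef
  have hPm : P.Monic := hp.map _
  have hP0 : P ≠ 0 := hPm.ne_zero
  have hPconj : conjP P = P := by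
    rw [hPdef, conjP, Polynomial.map_map,
      show (starRingEnd ℂ).comp (algebraMap ℝ ℂ) = algebraMap ℝ ℂ from
        RingHom.ext fun x => by simp [Complex.conj_ofReal]]
  have hProotsconj : P.roots.map (starRingEnd ℂ) = P.roots := by
    conv_rhs => rw [← hPconj, roots_conjP]
  set S : Set (Polynomial ℂ × Polynomial ℂ) := {q : Polynomial ℂ × Polynomial ℂ |
        q.1.Monic ∧ q.2.Monic ∧ q.1.natDegree = k - 1 ∧ q.2.natDegree = k - 1 ∧
        P = q.1 * q.2 ∧ ¬(IsRealPoly q.1 ∧ IsRealPoly q.2)} with hSdef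
  -- basic facts about members
  have hroots_add : ∀ q ∈ S, P.roots = q.1.roots + q.2.roots := by
    intro q hq
    obtain ⟨h1, h2, h3, h4, h5, h6⟩ := hq
    rw [h5, Polynomial.roots_mul (mul_ne_zero h1.ne_zero h2.ne_zero)]
  have hdisj : ∀ q ∈ S, q.1.roots.Nodup ∧ q.2.roots.Nodup ∧ Disjoint q.1.roots q.2.roots := by
    intro q hq
    have h := hnodup
    rw [hroots_add q hq, Multiset.nodup_add] at h
    exact h
  -- conjugation and swap operations
  set cc : Polynomial ℂ × Polynomial ℂ → Polynomial ℂ × Polynomial ℂ :=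
    fun q => (conjP q.1, conjP q.2) with hccdef
  have hccS : ∀ q ∈ S, cc q ∈ S := by
    intro q hq
    obtain ⟨h1, h2, h3, h4, h5, h6⟩ := hq
    refine ⟨h1.map _, h2.map _, ?_, ?_, ?_, ?_⟩
    · rw [hccdef]; simpa [Polynomial.natDegree_map] using h3
    · rw [hccdef]; simpa [Polynomial.natDegree_map] using h4
    · rw [hccdef]
      show P = conjP q.1 * conjP q.2
      exact (hPconj.symm.trans (congrArg conjP h5)).trans (Polynomial.map_mul _)
    · rintro ⟨hr1, hr2⟩
      refine h6 ⟨?_, ?_⟩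
      · rw [isRealPoly_iff2]
        exact conjP_inj ((isRealPoly_iff2 _).mp hr1)
      · rw [isRealPoly_iff2]
        exact conjP_inj ((isRealPoly_iff2 _).mp hr2)
  have hswS : ∀ q ∈ S, q.swap ∈ S := by
    intro q hq
    obtain ⟨h1, h2, h3, h4, h5, h6⟩ := hq
    exact ⟨h2, h1, h4, h3, by rwa [mul_comm] at h5, fun ⟨a, b⟩ => h6 ⟨b, a⟩⟩
  -- the swap has no fixed points in S
  have hsw_ne : ∀ q ∈ S, q.1 ≠ q.2 := by
    intro q hq heq
    have hroots := hroots_add q hq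
    obtain ⟨h1, h2, h3, h4, h5, h6⟩ := hq
    rw [← heq] at hroots
    have hdeg1 : 0 < q.1.natDegree := by omega
    obtain ⟨z, hz⟩ := IsAlgClosed.exists_root q.1
      (Polynomial.natDegree_pos_iff_degree_pos.mp hdeg1).ne'
    have hzmem : z ∈ q.1.roots := Polynomial.mem_roots'.mpr ⟨h1.ne_zero, hz⟩
    have hcount := Multiset.nodup_iff_count_le_one.mp hnodup z
    rw [hroots, Multiset.count_add] at hcount
    have := Multiset.one_le_count_iff_mem.mpr hzmem
    omega
  -- conjugation has no fixed points in S
  have hcc_ne : ∀ q ∈ S, cc q ≠ q := by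
    intro q hq heq
    obtain ⟨h1, h2, h3, h4, h5, h6⟩ := hq
    rw [hccdef, Prod.ext_iff] at heq
    exact h6 ⟨(isRealPoly_iff2 _).mpr heq.1, (isRealPoly_iff2 _).mpr heq.2⟩
  -- finiteness
  have hrle : ∀ q ∈ S, q.1.roots ≤ P.roots := by
    intro q hq
    rw [hroots_add q hq]
    exact Multiset.le_add_right _ _
  haveI hfinty : Finite ↥S := by
    have hinj : Function.Injective (fun (q : ↥S) =>
        (⟨q.1.1.roots.toFinset, by
          rw [Finset.mem_powerset]
          intro z hz
          rw [Multiset.mem_toFinset] at hz ⊢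
          exact Multiset.mem_of_le (hrle q.1 q.2) hz⟩ :
          {t // t ∈ P.roots.toFinset.powerset})) := by
      intro q q' h
      simp only [Subtype.mk.injEq] at h
      obtain ⟨m1, m2, m3, m4, m5, m6⟩ := q.2
      obtain ⟨n1, n2, n3, n4, n5, n6⟩ := q'.2
      have hnd1 := (hdisj q.1 q.2).1
      have hnd1' := (hdisj q'.1 q'.2).1
      have hre : q.1.1.roots = q'.1.1.roots := by
        have e1 : q.1.1.roots.toFinset.val = q.1.1.roots := by
          rw [Multiset.toFinset_val, Multiset.dedup_eq_self.mpr hnd1]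
        have e2 : q'.1.1.roots.toFinset.val = q'.1.1.roots := by
          rw [Multiset.toFinset_val, Multiset.dedup_eq_self.mpr hnd1']
        rw [← e1, ← e2, h]
      have hq1 : q.1.1 = q'.1.1 := by
        rw [monic_eq_prod m1, monic_eq_prod n1, hre]
      have hq2 : q.1.2 = q'.1.2 := by
        apply mul_left_cancel₀ m1.ne_zero
        rw [← m5, hq1, ← n5]
      exact Subtype.ext (Prod.ext hq1 hq2)
    exact Finite.of_injective _ hinj
  have hfin : S.Finite := S.toFinite
  rw [Set.ncard_eq_toFinset_card S hfin]
  set F : Finset (Polynomial ℂ × Polynomial ℂ) := hfin.toFinset with hFdef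
  have hFS : ∀ q, q ∈ F ↔ q ∈ S := fun q => Set.Finite.mem_toFinset hfin
  set Tu : Finset (Polynomial ℂ × Polynomial ℂ) :=
    F.filter (fun q => ¬ q.2 = conjP q.1) with hTudef
  set Ts : Finset (Polynomial ℂ × Polynomial ℂ) :=
    F.filter (fun q => q.2 = conjP q.1) with hTsdef
  have hsplit : Ts.card + Tu.card = F.card := by
    rw [hTsdef, hTudef]
    exact Finset.card_filter_add_card_filter_not _
  -- divisibility for Tu
  have hTumem : ∀ q ∈ Tu, q ∈ S ∧ ¬ q.2 = conjP q.1 := by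
    intro q hq
    rw [hTudef, Finset.mem_filter, hFS] at hq
    exact hq
  have hTumem' : ∀ q, q ∈ S → ¬ q.2 = conjP q.1 → q ∈ Tu := by
    intro q h1 h2
    rw [hTudef, Finset.mem_filter, hFS]
    exact ⟨h1, h2⟩
  have hdvdTu : 4 ∣ Tu.card := by
    apply four_dvd_card cc Prod.swap
    · -- cc maps Tu to Tu
      intro a ha
      obtain ⟨haS, hane⟩ := hTumem a ha
      refine hTumem' _ (hccS a haS) ?_
      show ¬ conjP a.2 = conjP (conjP a.1)
      intro h
      exact hane (conjP_inj h)
    · intro a ha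
      obtain ⟨haS, hane⟩ := hTumem a ha
      refine hTumem' _ (hswS a haS) ?_
      show ¬ a.1 = conjP a.2
      intro h
      exact hane (by rw [h, conjP_conjP])
    · intro a _
      exact Prod.ext (conjP_conjP a.1) (conjP_conjP a.2)
    · intro a _
      exact Prod.swap_swap a
    · intro a _
      rfl
    · intro a ha
      exact hcc_ne a (hTumem a ha).1
    · intro a ha
      intro h
      exact hsw_ne a (hTumem a ha).1 (congrArg Prod.fst h).symm
    · intro a ha
      intro h
      obtain ⟨haS, hane⟩ := hTumem a ha
      have h1 : conjP a.2 = a.1 := congrArg Prod.fst h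
      exact hane (by rw [← h1, conjP_conjP])
  -- divisibility for Ts
  have hTsmem : ∀ q ∈ Ts, q ∈ S ∧ q.2 = conjP q.1 := by
    intro q hq
    rw [hTsdef, Finset.mem_filter, hFS] at hq
    exact hq
  have hTsmem' : ∀ q, q ∈ S → q.2 = conjP q.1 → q ∈ Ts := by
    intro q h1 h2
    rw [hTsdef, Finset.mem_filter, hFS]
    exact ⟨h1, h2⟩
  have hdvdTs : 4 ∣ Ts.card := by
    rcases Ts.eq_empty_or_nonempty with hTe | ⟨q0, hq0⟩
    · simp [hTe]
    obtain ⟨hq0S, hq0c⟩ := hTsmem q0 hq0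
    -- q0.1 is not real
    have hq0nr : ¬ IsRealPoly q0.1 := by
      intro hre
      have := (isRealPoly_iff2 _).mp hre
      exact hsw_ne q0 hq0S (by rw [hq0c, this])
    -- q0.1 has a nonreal root
    have hβ : ∃ β ∈ q0.1.roots, β.im ≠ 0 := by
      by_contra hcon
      push_neg at hcon
      apply hq0nr
      rw [isRealPoly_iff2]
      conv_rhs => rw [monic_eq_prod hq0S.1]
      conv_lhs => rw [monic_eq_prod hq0S.1]
      rw [conjP_prod]
      apply congrArg Multiset.prod
      apply Multiset.map_congr rfl
      intro a ha
      rw [Complex.conj_eq_iff_im.mpr (hcon a ha)]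
    obtain ⟨β0, hβ0q, hβ0im⟩ := hβ
    have hβ0P : β0 ∈ P.roots := by
      rw [hroots_add q0 hq0S, Multiset.mem_add]
      exact Or.inl hβ0q
    have hβ0ne : (starRingEnd ℂ) β0 ≠ β0 := fun h => hβ0im (Complex.conj_eq_iff_im.mp h)
    have hcβ0P : (starRingEnd ℂ) β0 ∈ P.roots := by
      rw [← hProotsconj]
      exact Multiset.mem_map_of_mem _ hβ0P
    set sw : ℂ → ℂ := fun z => if z = β0 then (starRingEnd ℂ) β0
      else if z = (starRingEnd ℂ) β0 then β0 else z with hswdef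
    have hsw1 : sw β0 = (starRingEnd ℂ) β0 := by simp [hswdef]
    have hsw2 : sw ((starRingEnd ℂ) β0) = β0 := by simp [hswdef, hβ0ne]
    have hsw3 : ∀ z, z ≠ β0 → z ≠ (starRingEnd ℂ) β0 → sw z = z := by
      intro z h1 h2; simp [hswdef, h1, h2]
    have hswinv : ∀ z, sw (sw z) = z := by
      intro z
      by_cases h1 : z = β0
      · rw [h1, hsw1, hsw2]
      by_cases h2 : z = (starRingEnd ℂ) β0
      · rw [h2, hsw2, hsw1]
      rw [hsw3 z h1 h2, hsw3 z h1 h2]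
    have hswconj : ∀ z, (starRingEnd ℂ) (sw z) = sw ((starRingEnd ℂ) z) := by
      intro z
      by_cases h1 : z = β0
      · rw [h1, hsw1, Complex.conj_conj, hsw2]
      by_cases h2 : z = (starRingEnd ℂ) β0
      · rw [h2, hsw2, Complex.conj_conj, hsw1]
      rw [hsw3 z h1 h2, hsw3 _ (fun h => h2 (by rw [← Complex.conj_conj z, h]))
        (fun h => h1 (by
          have := congrArg (starRingEnd ℂ) h
          rwa [Complex.conj_conj, Complex.conj_conj] at this))]
    set ρ1 : Polynomial ℂ → Polynomial ℂ :=
      fun h => ((h.roots.map sw).map fun a => X - C a).prod with hρ1def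
    have hρ1monic : ∀ h, (ρ1 h).Monic :=
      fun h => monic_multiset_prod_of_monic _ _ fun a _ => monic_X_sub_C a
    have hρ1roots : ∀ h, (ρ1 h).roots = h.roots.map sw :=
      fun h => Polynomial.roots_multiset_prod_X_sub_C _
    have hρ1deg : ∀ h : Polynomial ℂ, h.Monic → (ρ1 h).natDegree = h.natDegree := by
      intro h hm
      rw [← card_roots_monic (hρ1monic h), hρ1roots, Multiset.card_map, card_roots_monic hm]
    have hρ1conj : ∀ h : Polynomial ℂ, conjP (ρ1 h) = ρ1 (conjP h) := by
      intro h
      show conjP (((h.roots.map sw).map fun a => X - C a).prod)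
        = (((conjP h).roots.map sw).map fun a => X - C a).prod
      rw [conjP_prod, roots_conjP, Multiset.map_map, Multiset.map_map, Multiset.map_map]
      apply congrArg Multiset.prod
      apply Multiset.map_congr rfl
      intro a _
      simp only [Function.comp_apply]
      rw [hswconj]
    have hρ1ρ1 : ∀ h : Polynomial ℂ, h.Monic → ρ1 (ρ1 h) = h := by
      intro h hm
      have hmm : ((ρ1 h).roots.map sw) = h.roots := by
        rw [hρ1roots, Multiset.map_map]
        exact (Multiset.map_congr rfl fun x _ => hswinv x).trans (Multiset.map_id _)
      show (((ρ1 h).roots.map sw).map fun a => X - C a).prod = h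
      rw [hmm]
      exact (monic_eq_prod hm).symm
    set ρ : Polynomial ℂ × Polynomial ℂ → Polynomial ℂ × Polynomial ℂ :=
      fun q => (ρ1 q.1, ρ1 q.2) with hρdef
    -- the γ gadget
    have hγ : ∀ q, q ∈ S → q.2 = conjP q.1 → ∃ γ,
        γ ∈ q.1.roots ∧ (starRingEnd ℂ) γ ∉ q.1.roots ∧
        sw γ = (starRingEnd ℂ) γ ∧ (γ = β0 ∨ γ = (starRingEnd ℂ) β0) := by
      intro q hqS hqc
      have hdj := (hdisj q hqS).2.2
      have hq2roots : q.2.roots = q.1.roots.map (starRingEnd ℂ) := by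
        rw [hqc, roots_conjP]
      have hβor : β0 ∈ q.1.roots ∨ β0 ∈ q.2.roots := by
        rw [← Multiset.mem_add, ← hroots_add q hqS]
        exact hβ0P
      rcases hβor with hc1 | hc2
      · refine ⟨β0, hc1, ?_, hsw1, Or.inl rfl⟩
        intro hmem
        exact Multiset.disjoint_left.mp hdj hmem
          (by rw [hq2roots]; exact Multiset.mem_map_of_mem _ hc1)
      · have hcβq1 : (starRingEnd ℂ) β0 ∈ q.1.roots := by
          rw [hq2roots] at hc2
          obtain ⟨a, ha, haeq⟩ := Multiset.mem_map.mp hc2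
          have : a = (starRingEnd ℂ) β0 := by
            rw [← haeq, Complex.conj_conj]
          rwa [← this]
        refine ⟨(starRingEnd ℂ) β0, hcβq1, ?_, ?_, Or.inr rfl⟩
        · rw [Complex.conj_conj]
          intro hmem
          refine Multiset.disjoint_left.mp hdj hmem ?_
          rw [hq2roots]
          have := Multiset.mem_map_of_mem (starRingEnd ℂ) hcβq1
          rwa [Complex.conj_conj] at this
        · rw [hsw2, Complex.conj_conj]
    -- swap of roots of P
    have hswP : P.roots.map sw = P.roots := by
      have h2 : (starRingEnd ℂ) β0 ∈ P.roots.erase β0 :=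
        (Multiset.mem_erase_of_ne hβ0ne).mpr hcβ0P
      set rest : Multiset ℂ := (P.roots.erase β0).erase ((starRingEnd ℂ) β0) with hrest
      have e1 : P.roots = β0 ::ₘ ((starRingEnd ℂ) β0 ::ₘ rest) := by
        rw [hrest, Multiset.cons_erase h2, Multiset.cons_erase hβ0P]
      have hnd : P.roots.Nodup := hPdef ▸ hnodup
      have hrest_ne : ∀ a ∈ rest, a ≠ β0 ∧ a ≠ (starRingEnd ℂ) β0 := by
        intro a ha
        constructor
        · intro h
          subst h
          have : a ∈ P.roots.erase a := Multiset.mem_of_mem_erase ha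
          exact hnd.notMem_erase this
        · intro h
          subst h
          exact (hnd.erase β0).notMem_erase ha
      conv_lhs => rw [e1]
      rw [Multiset.map_cons, Multiset.map_cons, hsw1, hsw2]
      have hrestmap : rest.map sw = rest :=
        (Multiset.map_congr rfl fun a ha => hsw3 a (hrest_ne a ha).1 (hrest_ne a ha).2).trans
          (Multiset.map_id _)
      rw [hrestmap]
      conv_rhs => rw [e1]
      exact Multiset.cons_swap _ _ _
    -- ρ maps Ts into Ts
    have hρTs : ∀ q, q ∈ S → q.2 = conjP q.1 → (ρ q ∈ S ∧ (ρ q).2 = conjP ((ρ q).1)) := by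
      intro q hqS hqc
      obtain ⟨h1, h2, h3, h4, h5, h6⟩ := hqS
      have hprod : P = ρ1 q.1 * ρ1 q.2 := by
        rw [hρ1def]
        show P = ((q.1.roots.map sw).map fun a => X - C a).prod *
          ((q.2.roots.map sw).map fun a => X - C a).prod
        rw [← Multiset.prod_add, ← Multiset.map_add, ← Multiset.map_add,
          ← hroots_add q ⟨h1, h2, h3, h4, h5, h6⟩, hswP]
        exact monic_eq_prod hPm
      have h2c : (ρ q).2 = conjP ((ρ q).1) := by
        show ρ1 q.2 = conjP (ρ1 q.1)
        rw [hρ1conj, hqc]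
      obtain ⟨γ, hγ1, hγ2, hγ3, hγ4⟩ := hγ q ⟨h1, h2, h3, h4, h5, h6⟩ hqc
      refine ⟨⟨hρ1monic _, hρ1monic _, by rw [hρ1deg _ h1]; exact h3,
        by rw [hρ1deg _ h2]; exact h4, hprod, ?_⟩, h2c⟩
      rintro ⟨hre1, _⟩
      -- conj γ is a root of ρ1 q.1, so γ is too (by realness), contradiction
      have hmem1 : (starRingEnd ℂ) γ ∈ (ρ1 q.1).roots := by
        rw [hρ1roots, ← hγ3]
        exact Multiset.mem_map_of_mem _ hγ1
      have hmem2 : γ ∈ (ρ1 q.1).roots := by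
        have := realPoly_roots_conj hre1 hmem1
        rwa [Complex.conj_conj] at this
      rw [hρ1roots] at hmem2
      obtain ⟨a, ha, haeq⟩ := Multiset.mem_map.mp hmem2
      have : a = sw γ := by rw [← hswinv a, haeq]
      rw [this, hγ3] at ha
      exact hγ2 ha
    have hργ_ne : ∀ q, q ∈ S → q.2 = conjP q.1 → ρ1 q.1 ≠ q.1 := by
      intro q hqS hqc heq
      obtain ⟨γ, hγ1, hγ2, hγ3, hγ4⟩ := hγ q hqS hqc
      have : (starRingEnd ℂ) γ ∈ (ρ1 q.1).roots := by
        rw [hρ1roots, ← hγ3]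
        exact Multiset.mem_map_of_mem _ hγ1
      rw [heq] at this
      exact hγ2 this
    have hρccγ_ne : ∀ q, q ∈ S → q.2 = conjP q.1 → ρ1 (conjP q.1) ≠ q.1 := by
      intro q hqS hqc heq
      obtain ⟨γ, hγ1, hγ2, hγ3, hγ4⟩ := hγ q hqS hqc
      have hdj := (hdisj q hqS).2.2
      have hnd1 := (hdisj q hqS).1
      have hq2roots : q.2.roots = q.1.roots.map (starRingEnd ℂ) := by
        rw [hqc, roots_conjP]
      -- roots q.1 = map (sw ∘ conj) (roots q.1)
      have hre : q.1.roots = (q.1.roots.map (starRingEnd ℂ)).map sw := by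
        conv_lhs => rw [← heq]
        rw [hρ1roots, roots_conjP]
      -- pick β1 ∈ roots q.1, β1 ≠ γ
      have hcard : Multiset.card q.1.roots = k - 1 := by
        rw [card_roots_monic hqS.1]
        exact hqS.2.2.1
      have hcard_erase : Multiset.card (q.1.roots.erase γ) = k - 2 := by
        rw [Multiset.card_erase_of_mem hγ1, hcard, Nat.pred_eq_sub_one]
        omega
      have hne0 : q.1.roots.erase γ ≠ 0 := by
        intro h
        rw [h] at hcard_erase
        simp at hcard_erase
        omega
      obtain ⟨β1, hβ1⟩ := Multiset.exists_mem_of_ne_zero hne0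
      have hβ1mem : β1 ∈ q.1.roots := Multiset.mem_of_mem_erase hβ1
      have hβ1ne : β1 ≠ γ := (hnd1.mem_erase_iff.mp hβ1).1
      -- β1 is not β0 nor conj β0
      have hβ1ne0 : β1 ≠ β0 ∧ β1 ≠ (starRingEnd ℂ) β0 := by
        rcases hγ4 with hgb | hgb
        · constructor
          · intro h; exact hβ1ne (by rw [h, hgb])
          · intro h; rw [hgb] at hγ2; exact hγ2 (h ▸ hβ1mem)
        · constructor
          · intro h
            rw [hgb, Complex.conj_conj] at hγ2
            exact hγ2 (h ▸ hβ1mem)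
          · intro h; exact hβ1ne (by rw [h, hgb])
        -- done
      -- β1 = sw (conj a) for some a ∈ roots q.1
      have hβ1mem' : β1 ∈ (q.1.roots.map (starRingEnd ℂ)).map sw := hre ▸ hβ1mem
      rw [Multiset.map_map] at hβ1mem'
      obtain ⟨a, ha, haeq⟩ := Multiset.mem_map.mp hβ1mem'
      simp only [Function.comp_apply] at haeq
      have hswa : (starRingEnd ℂ) a = β1 := by
        by_cases h1 : (starRingEnd ℂ) a = β0
        · rw [h1, hsw1] at haeq
          exact absurd haeq.symm hβ1ne0.2
        by_cases h2 : (starRingEnd ℂ) a = (starRingEnd ℂ) β0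
        · rw [h2, hsw2] at haeq
          exact absurd haeq.symm hβ1ne0.1
        rwa [hsw3 _ h1 h2] at haeq
      have haval : a = (starRingEnd ℂ) β1 := by
        rw [← hswa, Complex.conj_conj]
      have hconjβ1_q1 : (starRingEnd ℂ) β1 ∈ q.1.roots := haval ▸ ha
      have hconjβ1_q2 : (starRingEnd ℂ) β1 ∈ q.2.roots := by
        rw [hq2roots]
        exact Multiset.mem_map_of_mem _ hβ1mem
      exact Multiset.disjoint_left.mp hdj hconjβ1_q1 hconjβ1_q2
    apply four_dvd_card cc ρ
    · intro a ha
      obtain ⟨haS, hac⟩ := hTsmem a ha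
      refine hTsmem' _ (hccS a haS) ?_
      show conjP a.2 = conjP (conjP a.1)
      rw [hac]
    · intro a ha
      obtain ⟨haS, hac⟩ := hTsmem a ha
      obtain ⟨hm, hc⟩ := hρTs a haS hac
      exact hTsmem' _ hm hc
    · intro a _
      exact Prod.ext (conjP_conjP a.1) (conjP_conjP a.2)
    · intro a ha
      obtain ⟨haS, hac⟩ := hTsmem a ha
      exact Prod.ext (hρ1ρ1 _ haS.1) (hρ1ρ1 _ haS.2.1)
    · intro a _
      exact Prod.ext (hρ1conj a.1) (hρ1conj a.2)
    · intro a ha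
      exact hcc_ne a (hTsmem a ha).1
    · intro a ha
      obtain ⟨haS, hac⟩ := hTsmem a ha
      intro h
      exact hργ_ne a haS hac (congrArg Prod.fst h)
    · intro a ha
      obtain ⟨haS, hac⟩ := hTsmem a ha
      intro h
      have h1 : conjP (ρ1 a.1) = a.1 := congrArg Prod.fst h
      rw [hρ1conj] at h1
      exact hρccγ_ne a haS hac h1
  omega

/-- For k > 2 and a squarefree monic real polynomial p of degree 2k−2 with r
real roots (r even), the number of conjugation-unstable ordered factorizations
of p into monic complex polynomials of degree k−1 each is divisible by 4;
consequently C(2k−2, k−1) − ν(k, 2k, r) ≡ 0 (mod 4). -/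
theorem nonreal_splits_div_four (k r : ℕ) (hk : 2 < k) (hre : Even r)
    (hr : r ≤ 2 * k - 2) (p : Polynomial ℝ) (hp : p.Monic)
    (hdeg : p.natDegree = 2 * k - 2)
    (hnodup : ((p.map (algebraMap ℝ ℂ)).roots).Nodup)
    (hrr : r = p.roots.toFinset.card) :
    4 ∣ Set.ncard {q : Polynomial ℂ × Polynomial ℂ |
        q.1.Monic ∧ q.2.Monic ∧ q.1.natDegree = k - 1 ∧ q.2.natDegree = k - 1 ∧
        p.map (algebraMap ℝ ℂ) = q.1 * q.2 ∧
        ¬(IsRealPoly q.1 ∧ IsRealPoly q.2)} ∧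
    (4 : ℤ) ∣ ((Nat.choose (2 * k - 2) (k - 1) : ℤ) - (nu k (2 * k) r : ℤ)) := by
  constructor
  · exact part1 k hk p hp hdeg hnodup
  · have h := part2 k r hk hre hr
    have h2 : (((Nat.choose (2 * k - 2) (k - 1) : ℤ) - (nu k (2 * k) r : ℤ) : ℤ) : ZMod 4) = 0 := by
      push_cast
      rw [h]
      ring
    exact_mod_cast (ZMod.intCast_zmod_eq_zero_iff_dvd _ 4).mp h2
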